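/- Let C ⊆ E be a convex set of diameter at most D (i.e., ‖x - y‖ ≤ D for all x, y ∈ C) with D > 0, let T : E → E map C into C and be γ-Lipschitz on C with γ > 1, and let 0 < ε ≤ ‖T(x₀) - x₀‖ for some x₀ ∈ C, with additionally ε < 2γD. Set β = 1 - ε/(2γD), λ = 1 - β/γ, and let the sequence (x_k) be defined by x_{k+1} = λ·x₀ + (1-λ)·T(x_k). Then there exists k ≤ ⌈ln(2·‖T(x₀) - x₀‖/ε)/ln(1/β)⌉ such that ‖T(x_k) - x_k‖ ≤ (γ - 1)·D + ε. -/

import Mathlib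

/-- With the particular choice `β = 1 - ε/(2γD)` and `λ = 1 - β/γ`, the
fixed-step Halpern iteration applied to a γ-Lipschitz operator (γ > 1) mapping
a convex set of diameter at most `D` to itself reaches a point with
fixed-point error at most `(γ - 1) D + ε` within
`⌈ln(2‖T x₀ - x₀‖/ε)/ln(1/β)⌉` iterations. -/
theorem fixed_step_halpern_expansive_minimal_displacement
    {E : Type*} [NormedAddCommGroup E] [NormedSpace ℝ E]
    (C : Set E) (hC : Convex ℝ C)
    (D : ℝ) (hD0 : 0 < D) (hdiam : ∀ x ∈ C, ∀ y ∈ C, ‖x - y‖ ≤ D)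
    (T : E → E) (hTC : ∀ x ∈ C, T x ∈ C)
    (γ : ℝ) (hγ : 1 < γ)
    (hT : ∀ x ∈ C, ∀ y ∈ C, ‖T x - T y‖ ≤ γ * ‖x - y‖)
    (x₀ : E) (hx₀C : x₀ ∈ C)
    (ε : ℝ) (hε0 : 0 < ε) (hε1 : ε ≤ ‖T x₀ - x₀‖) (hε2 : ε < 2 * γ * D)
    (β : ℝ) (hβ : β = 1 - ε / (2 * γ * D))
    (l : ℝ) (hl : l = 1 - β / γ)
    (x : ℕ → E) (hx0 : x 0 = x₀)
    (hx : ∀ k : ℕ, x (k + 1) = l • x₀ + (1 - l) • T (x k)) :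
    ∃ k : ℕ,
      k ≤ ⌈Real.log (2 * ‖T x₀ - x₀‖ / ε) / Real.log (1 / β)⌉₊ ∧
      ‖T (x k) - x k‖ ≤ (γ - 1) * D + ε := by
  have hγ0 : (0:ℝ) < γ := lt_trans one_pos hγ
  have hr0 : 0 < ‖T x₀ - x₀‖ := lt_of_lt_of_le hε0 hε1
  have h2γD : (0:ℝ) < 2 * γ * D := by positivity
  have hβ0 : 0 < β := by
    rw [hβ]
    have : ε / (2 * γ * D) < 1 := (div_lt_one h2γD).2 hε2
    linarith
  have hβ1 : β < 1 := by
    rw [hβ]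
    have : 0 < ε / (2 * γ * D) := by positivity
    linarith
  have hβγ : β / γ < 1 := (div_lt_one hγ0).2 (lt_trans hβ1 hγ)
  have hβγ0 : 0 < β / γ := div_pos hβ0 hγ0
  have h1l : 1 - l = β / γ := by rw [hl]; ring
  have hl0 : 0 < l := by rw [hl]; linarith
  have hl1 : l < 1 := by rw [hl]; linarith
  have hmem : ∀ k, x k ∈ C := by
    intro k
    induction k with
    | zero => rw [hx0]; exact hx₀C
    | succ n ih =>
      rw [hx n]
      exact hC hx₀C (hTC _ ih) hl0.le (by linarith) (by ring)
  have hdiff : ∀ k, ‖x (k+1) - x k‖ ≤ β ^ k * ((β / γ) * ‖T x₀ - x₀‖) := by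
    intro k
    induction k with
    | zero =>
      have h1 : x 1 - x 0 = (1 - l) • (T x₀ - x₀) := by
        rw [hx 0, hx0]; module
      rw [h1, norm_smul, Real.norm_eq_abs, abs_of_nonneg (by linarith), h1l]
      simp
    | succ n ih =>
      have h1 : x (n+2) - x (n+1) = (1 - l) • (T (x (n+1)) - T (x n)) := by
        rw [hx (n+1), hx n]; module
      rw [h1, norm_smul, Real.norm_eq_abs, abs_of_nonneg (by linarith), h1l]
      have h2 : ‖T (x (n+1)) - T (x n)‖ ≤ γ * ‖x (n+1) - x n‖ :=
        hT _ (hmem _) _ (hmem _)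
      calc β / γ * ‖T (x (n+1)) - T (x n)‖
          ≤ β / γ * (γ * ‖x (n+1) - x n‖) := by
            exact mul_le_mul_of_nonneg_left h2 hβγ0.le
        _ = β * ‖x (n+1) - x n‖ := by field_simp
        _ ≤ β * (β ^ n * ((β / γ) * ‖T x₀ - x₀‖)) :=
            mul_le_mul_of_nonneg_left ih hβ0.le
        _ = β ^ (n+1) * ((β / γ) * ‖T x₀ - x₀‖) := by ring
  set K := ⌈Real.log (2 * ‖T x₀ - x₀‖ / ε) / Real.log (1 / β)⌉₊ with hK
  have hlogβ : 0 < Real.log (1 / β) := by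
    apply Real.log_pos
    rw [one_div]
    exact (one_lt_inv₀ hβ0).2 hβ1
  have hKlog : Real.log (2 * ‖T x₀ - x₀‖ / ε) ≤ K * Real.log (1 / β) := by
    rw [← div_le_iff₀ hlogβ]
    exact Nat.le_ceil _
  have hpow : β ^ K ≤ ε / (2 * ‖T x₀ - x₀‖) := by
    have hbK : (β:ℝ) ^ K = Real.exp (K * Real.log β) := by
      rw [← Real.log_pow, Real.exp_log (pow_pos hβ0 K)]
    have hloginv : Real.log (1 / β) = -Real.log β := by
      rw [one_div, Real.log_inv]
    have heq : ε / (2 * ‖T x₀ - x₀‖) = Real.exp (Real.log (ε / (2 * ‖T x₀ - x₀‖))) := by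
      rw [Real.exp_log (by positivity)]
    rw [hbK, heq]
    apply Real.exp_le_exp.2
    have h3 : Real.log (ε / (2 * ‖T x₀ - x₀‖)) = -Real.log (2 * ‖T x₀ - x₀‖ / ε) := by
      rw [← Real.log_inv, inv_div]
    rw [h3]
    have : (K:ℝ) * Real.log β = -((K:ℝ) * Real.log (1 / β)) := by
      rw [hloginv]; ring
    rw [this]
    linarith
  refine ⟨K, le_refl _, ?_⟩
  have key : T (x K) - x K = l • (T (x K) - x₀) + (x (K+1) - x K) := by
    rw [hx K]; module
  have hb1 : ‖T (x K) - x K‖ ≤ l * ‖T (x K) - x₀‖ + ‖x (K+1) - x K‖ := by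
    rw [key]
    refine le_trans (norm_add_le _ _) ?_
    rw [norm_smul, Real.norm_eq_abs, abs_of_nonneg hl0.le]
  have hb2 : ‖T (x K) - x₀‖ ≤ D := hdiam _ (hTC _ (hmem K)) _ hx₀C
  have hb3 : l * ‖T (x K) - x₀‖ ≤ l * D := mul_le_mul_of_nonneg_left hb2 hl0.le
  have hlD : l * D ≤ (γ - 1) * D + ε / 2 := by
    rw [hl, hβ]
    rw [show (1 - (1 - ε / (2 * γ * D)) / γ) * D
        = ((γ - 1) * D * (2 * γ) + ε) / (2 * γ * γ) by field_simp; ring]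
    rw [div_le_iff₀ (by positivity)]
    nlinarith [mul_nonneg (mul_nonneg hD0.le hγ0.le) (sq_nonneg (γ - 1)),
      mul_nonneg hε0.le (by nlinarith : (0:ℝ) ≤ γ * γ - 1)]
  have hb4 : β ^ K * ((β / γ) * ‖T x₀ - x₀‖) ≤ ε / 2 := by
    have h5 : (β / γ) * ‖T x₀ - x₀‖ ≤ ‖T x₀ - x₀‖ := by
      nlinarith
    have h6 := mul_le_mul hpow h5 (by positivity) (by positivity)
    refine le_trans h6 ?_
    rw [div_mul_eq_mul_div, mul_comm]
    rw [mul_comm 2 ‖T x₀ - x₀‖, mul_div_mul_left _ _ (ne_of_gt hr0)]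
  have := hdiff K
  linarith
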